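/- The regularized criterion $G_\Omega$ is scale-invariant in $(b,c)$: for every nonzero real $t$, $G_\Omega(\mu, V, t b, c/t) = G_\Omega(\mu, V, b, c)$. -/

import Mathlib

open Matrix

noncomputable def Gcrit (p h : ℕ) (Xbar : Fin p → ℝ) (sbar : Fin h → ℝ)
    (Sighat : Matrix (Fin p) (Fin p) ℝ) (W : Matrix (Fin h) (Fin h) ℝ)
    (M : Matrix (Fin h) (Fin p) ℝ)
    (μ : Fin p → ℝ) (V : Matrix (Fin p) (Fin p) ℝ) (b : Fin p → ℝ)
    (c : Fin h → ℝ) : ℝ :=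
  Real.log V.det + (Sighat * V⁻¹).trace
    + (μ - Xbar + (sbar ⬝ᵥ c) • V.mulVec b) ⬝ᵥ
        V⁻¹.mulVec (μ - Xbar + (sbar ⬝ᵥ c) • V.mulVec b)
    + (c ⬝ᵥ W.mulVec c) * (b ⬝ᵥ V.mulVec b) - 2 * (c ⬝ᵥ M.mulVec b)

noncomputable def GOmega (p h : ℕ) (Xbar : Fin p → ℝ) (sbar : Fin h → ℝ)
    (Sighat Sig Ω : Matrix (Fin p) (Fin p) ℝ) (W : Matrix (Fin h) (Fin h) ℝ)
    (M : Matrix (Fin h) (Fin p) ℝ)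
    (μ : Fin p → ℝ) (V : Matrix (Fin p) (Fin p) ℝ) (b : Fin p → ℝ)
    (c : Fin h → ℝ) : ℝ :=
  Gcrit p h Xbar sbar Sighat W M μ V b c
    + (b ⬝ᵥ Ω⁻¹.mulVec b) * (b ⬝ᵥ V.mulVec b) * (c ⬝ᵥ W.mulVec c) /
        (b ⬝ᵥ Sig.mulVec b)

theorem stmt_4 (p h : ℕ) (Xbar : Fin p → ℝ) (sbar : Fin h → ℝ)
    (Sighat Sig Ω V : Matrix (Fin p) (Fin p) ℝ)
    (hV : V.PosDef) (hSig : Sig.PosDef) (hSighat : Sighat.PosDef) (hΩ : Ω.PosDef)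
    (W : Matrix (Fin h) (Fin h) ℝ) (hW : W.PosSemidef)
    (M : Matrix (Fin h) (Fin p) ℝ)
    (μ b : Fin p → ℝ) (hb : b ≠ 0) (c : Fin h → ℝ)
    (t : ℝ) (ht : t ≠ 0) :
    GOmega p h Xbar sbar Sighat Sig Ω W M μ V (t • b) (t⁻¹ • c) =
      GOmega p h Xbar sbar Sighat Sig Ω W M μ V b c := by
  have hbS : b ⬝ᵥ Sig.mulVec b ≠ 0 := by
    have := hSig.re_dotProduct_pos (x := b) (by simpa using hb)
    simp only [RCLike.re_to_real] at this
    positivity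
  simp only [GOmega, Gcrit, mulVec_smul, dotProduct_smul, smul_dotProduct,
    smul_smul, smul_eq_mul]
  rw [show t⁻¹ * (sbar ⬝ᵥ c) * t = sbar ⬝ᵥ c by field_simp]
  field_simp
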